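/- Fix λ ≠ 0. For all t ∈ ℝ, s in the domain of absolute convergence Ω_t of exp_g(λ;t), and x ∈ Ω_s: x ∈ Ω_t and exp_g(λ;t)(s) · exp_g(λ;s)(x) = exp_g(λ;t)(x) (semigroup/cocycle property of the Stieltjes exponential series). -/

import Mathlib

open MeasureTheory Set Finset

/-- The jump of `g` at `x`: `Δg(x) = g(x⁺) − g(x)`. -/
noncomputable def jumpOf (g : ℝ → ℝ) (x : ℝ) : ℝ := Function.rightLim g x - g x

/-- Oriented Lebesgue–Stieltjes integral: `∫_a^b f dμ = ∫_{[a,b)} f dμ` if `a ≤ b`,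
`= −∫_{[b,a)} f dμ` otherwise. -/
noncomputable def ointeg (μ : MeasureTheory.Measure ℝ) (f : ℝ → ℝ) (a b : ℝ) : ℝ :=
  if a ≤ b then ∫ s in Set.Ico a b, f s ∂μ else - ∫ s in Set.Ico b a, f s ∂μ

/-- The `g`-monomials centered at `c`, defined from the Lebesgue–Stieltjes measure `μ` of `g`:
`g_0 ≡ 1`, `g_{n+1}(x) = (n+1) ∫_c^x g_n dμ` (oriented). -/
noncomputable def gMon (μ : MeasureTheory.Measure ℝ) (c : ℝ) : ℕ → ℝ → ℝ
  | 0 => fun _ => 1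
  | n + 1 => fun x => ((n : ℝ) + 1) * ointeg μ (gMon μ c n) c x


/-- The Stieltjes exponential series centered at `c`: `exp_g(λ;c)(x) = Σ λⁿ g_{c,n}(x)/n!`. -/
noncomputable def gExp {𝕜 : Type*} [RCLike 𝕜] (μ : MeasureTheory.Measure ℝ)
    (l : 𝕜) (c x : ℝ) : 𝕜 :=
  ∑' n : ℕ, l ^ n * ((gMon μ c n x : ℝ) : 𝕜) / ((Nat.factorial n : ℝ) : 𝕜)

/-- `x` lies in the domain `Ω_c` of absolute convergence of `exp_g(λ;c)`. -/
def gExpAbsConv {𝕜 : Type*} [RCLike 𝕜] (μ : MeasureTheory.Measure ℝ)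
    (l : 𝕜) (c x : ℝ) : Prop :=
  Summable (fun n : ℕ => ‖l‖ ^ n * |gMon μ c n x| / (Nat.factorial n : ℝ))

section AuxStmt18

variable (μ : MeasureTheory.Measure ℝ)

private lemma ointeg_chasles' {f : ℝ → ℝ} (hf : ∀ a b : ℝ, IntegrableOn f (Set.Ico a b) μ)
    (a b c : ℝ) : ointeg μ f a c = ointeg μ f a b + ointeg μ f b c := by
  have key : ∀ x y z : ℝ, x ≤ y → y ≤ z →
      ∫ u in Set.Ico x z, f u ∂μ = (∫ u in Set.Ico x y, f u ∂μ) + ∫ u in Set.Ico y z, f u ∂μ := by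
    intro x y z hxy hyz
    rw [← Set.Ico_union_Ico_eq_Ico hxy hyz,
      setIntegral_union Set.Ico_disjoint_Ico_same measurableSet_Ico (hf x y) (hf y z)]
  unfold ointeg
  split_ifs with h1 h2 h3 h3 h2 h3 h3 <;>
    first
    | linarith
    | linarith [key a b c (by linarith) (by linarith)]
    | linarith [key a c b (by linarith) (by linarith)]
    | linarith [key b a c (by linarith) (by linarith)]
    | linarith [key b c a (by linarith) (by linarith)]
    | linarith [key c a b (by linarith) (by linarith)]
    | linarith [key c b a (by linarith) (by linarith)]

private lemma ointeg_sum' {ι : Type*} (s : Finset ι) (f : ι → ℝ → ℝ) (c : ι → ℝ)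
    (hf : ∀ i, ∀ a b : ℝ, IntegrableOn (f i) (Set.Ico a b) μ) (a b : ℝ) :
    ointeg μ (fun y => ∑ i ∈ s, c i * f i y) a b = ∑ i ∈ s, c i * ointeg μ (f i) a b := by
  unfold ointeg
  split_ifs with h
  · rw [integral_finset_sum s (fun i _ => ((hf i a b).const_mul (c i)))]
    exact Finset.sum_congr rfl fun i _ => integral_const_mul _ _
  · rw [integral_finset_sum s (fun i _ => ((hf i b a).const_mul (c i))), ← Finset.sum_neg_distrib]
    exact Finset.sum_congr rfl fun i _ => by rw [integral_const_mul]; ring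

private lemma ointeg_measurable' {f : ℝ → ℝ} (hf : ∀ a b : ℝ, IntegrableOn f (Set.Ico a b) μ)
    (c : ℝ) : Measurable (fun x => ointeg μ f c x) := by
  set fp : ℝ → ℝ := fun y => max (f y) 0 with hfp
  set fm : ℝ → ℝ := fun y => max (-f y) 0 with hfm
  have hfpI : ∀ a b : ℝ, IntegrableOn fp (Set.Ico a b) μ := fun a b => (hf a b).pos_part
  have hfmI : ∀ a b : ℝ, IntegrableOn fm (Set.Ico a b) μ := fun a b => (hf a b).neg.pos_part
  have hsplit : ∀ S : Set ℝ, IntegrableOn f S μ → IntegrableOn fp S μ → IntegrableOn fm S μ →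
      ∫ y in S, f y ∂μ = (∫ y in S, fp y ∂μ) - ∫ y in S, fm y ∂μ := by
    intro S h1 h2 h3
    rw [← integral_sub h2 h3]
    refine integral_congr_ae (Filter.Eventually.of_forall fun y => ?_)
    simp only [hfp, hfm]
    rcases le_total (f y) 0 with h | h
    · rw [max_eq_right h, max_eq_left (by linarith)]; ring
    · rw [max_eq_left h, max_eq_right (by linarith)]; ring
  have hmono : ∀ h : ℝ → ℝ, (∀ y, 0 ≤ h y) → (∀ a b : ℝ, IntegrableOn h (Set.Ico a b) μ) →
      Monotone (fun x => ∫ y in Set.Ico c x, h y ∂μ) ∧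
      Antitone (fun x => ∫ y in Set.Ico x c, h y ∂μ) := by
    intro h h0 hI
    constructor
    · intro x y hxy
      exact setIntegral_mono_set (hI c y) (Filter.Eventually.of_forall h0)
        (HasSubset.Subset.eventuallyLE (Set.Ico_subset_Ico_right hxy))
    · intro x y hxy
      exact setIntegral_mono_set (hI x c) (Filter.Eventually.of_forall h0)
        (HasSubset.Subset.eventuallyLE (Set.Ico_subset_Ico_left hxy))
  obtain ⟨hp1, hp2⟩ := hmono fp (fun y => le_max_right _ _) hfpI
  obtain ⟨hm1, hm2⟩ := hmono fm (fun y => le_max_right _ _) hfmI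
  have heq : (fun x => ointeg μ f c x) = fun x =>
      if c ≤ x then (∫ y in Set.Ico c x, fp y ∂μ) - ∫ y in Set.Ico c x, fm y ∂μ
      else -((∫ y in Set.Ico x c, fp y ∂μ) - ∫ y in Set.Ico x c, fm y ∂μ) := by
    funext x
    unfold ointeg
    split_ifs with h
    · exact hsplit _ (hf c x) (hfpI c x) (hfmI c x)
    · rw [hsplit _ (hf x c) (hfpI x c) (hfmI x c)]
  rw [heq]
  exact Measurable.ite measurableSet_Ici (hp1.measurable.sub hm1.measurable)
    (hp2.measurable.sub hm2.measurable).neg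

private lemma gMon_meas_bdd (hfin : ∀ a b : ℝ, μ (Set.Ico a b) ≠ ⊤) (c : ℝ) :
    ∀ n : ℕ, Measurable (gMon μ c n) ∧
      ∀ a b : ℝ, ∃ M : ℝ, ∀ x ∈ Set.Icc a b, |gMon μ c n x| ≤ M := by
  intro n
  induction n with
  | zero => exact ⟨measurable_const, fun a b => ⟨1, fun x _ => by simp [gMon]⟩⟩
  | succ n ih =>
    obtain ⟨hm, hb⟩ := ih
    have hI : ∀ a b : ℝ, IntegrableOn (gMon μ c n) (Set.Ico a b) μ := by
      intro a b
      obtain ⟨M, hM⟩ := hb a b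
      exact Measure.integrableOn_of_bounded (hfin a b) hm.aestronglyMeasurable
        (ae_restrict_of_forall_mem measurableSet_Ico fun x hx =>
          hM x (Set.Ico_subset_Icc_self hx))
    constructor
    · exact measurable_const.mul (ointeg_measurable' μ hI c)
    · intro a b
      set A := min c a
      set B := max c b
      refine ⟨((n : ℝ) + 1) * ∫ y in Set.Ico A B, |gMon μ c n y| ∂μ, fun x hx => ?_⟩
      have habs : IntegrableOn (fun y => |gMon μ c n y|) (Set.Ico A B) μ := (hI A B).abs
      have hbig : ∀ u v : ℝ, Set.Ico u v ⊆ Set.Ico A B →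
          |∫ y in Set.Ico u v, gMon μ c n y ∂μ| ≤ ∫ y in Set.Ico A B, |gMon μ c n y| ∂μ := by
        intro u v huv
        calc |∫ y in Set.Ico u v, gMon μ c n y ∂μ|
            ≤ ∫ y in Set.Ico u v, |gMon μ c n y| ∂μ := by
              simpa using norm_integral_le_integral_norm (μ := μ.restrict (Set.Ico u v)) (gMon μ c n)
          _ ≤ ∫ y in Set.Ico A B, |gMon μ c n y| ∂μ :=
              setIntegral_mono_set habs
                (Filter.Eventually.of_forall fun y => abs_nonneg _)
                (HasSubset.Subset.eventuallyLE huv)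
      have key : |ointeg μ (gMon μ c n) c x| ≤ ∫ y in Set.Ico A B, |gMon μ c n y| ∂μ := by
        unfold ointeg
        split_ifs with h
        · exact hbig c x (Set.Ico_subset_Ico (min_le_left _ _)
            (le_trans hx.2 (le_max_right _ _)))
        · rw [abs_neg]
          exact hbig x c (Set.Ico_subset_Ico
            (le_trans (min_le_right _ _) hx.1) (le_max_left _ _))
      have hpos : (0:ℝ) ≤ (n : ℝ) + 1 := by positivity
      calc |gMon μ c (n+1) x| = ((n:ℝ)+1) * |ointeg μ (gMon μ c n) c x| := by
            rw [show gMon μ c (n+1) x = ((n:ℝ)+1) * ointeg μ (gMon μ c n) c x from rfl,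
              abs_mul, abs_of_nonneg hpos]
        _ ≤ _ := mul_le_mul_of_nonneg_left key hpos

private lemma gMon_integrableOn' (hfin : ∀ a b : ℝ, μ (Set.Ico a b) ≠ ⊤) (c : ℝ) (n : ℕ)
    (a b : ℝ) : IntegrableOn (gMon μ c n) (Set.Ico a b) μ := by
  obtain ⟨hm, hb⟩ := gMon_meas_bdd μ hfin c n
  obtain ⟨M, hM⟩ := hb a b
  exact Measure.integrableOn_of_bounded (hfin a b) hm.aestronglyMeasurable
    (ae_restrict_of_forall_mem measurableSet_Ico fun x hx => hM x (Set.Ico_subset_Icc_self hx))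

private lemma ointeg_eq_gMon_succ (c : ℝ) (m : ℕ) (x : ℝ) :
    ointeg μ (gMon μ c m) c x = gMon μ c (m+1) x / ((m : ℝ) + 1) := by
  rw [show gMon μ c (m+1) x = ((m:ℝ)+1) * ointeg μ (gMon μ c m) c x from rfl]
  field_simp

private lemma gMon_binom (hfin : ∀ a b : ℝ, μ (Set.Ico a b) ≠ ⊤) (t s : ℝ) :
    ∀ n : ℕ, ∀ x : ℝ, gMon μ t n x / (Nat.factorial n : ℝ) =
      ∑ k ∈ Finset.range (n+1),
        (gMon μ t k s / (Nat.factorial k : ℝ)) *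
        (gMon μ s (n-k) x / (Nat.factorial (n-k) : ℝ)) := by
  intro n
  induction n with
  | zero => intro x; simp [gMon]
  | succ n ih =>
    intro x
    have hfact : (Nat.factorial n : ℝ) ≠ 0 := by positivity
    have hfun : gMon μ t n = fun y => ∑ k ∈ Finset.range (n+1),
        ((Nat.factorial n : ℝ) * (gMon μ t k s / (Nat.factorial k : ℝ)) /
          (Nat.factorial (n-k) : ℝ)) * gMon μ s (n-k) y := by
      funext y
      have h := ih y
      rw [div_eq_iff hfact] at h
      rw [h, Finset.sum_mul]
      exact Finset.sum_congr rfl fun k _ => by ring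
    have step1 : gMon μ t (n+1) x / (Nat.factorial (n+1) : ℝ)
        = ointeg μ (gMon μ t n) t x / (Nat.factorial n : ℝ) := by
      rw [show gMon μ t (n+1) x = ((n:ℝ)+1) * ointeg μ (gMon μ t n) t x from rfl,
        Nat.factorial_succ]
      push_cast
      field_simp
    rw [step1, ointeg_chasles' μ (gMon_integrableOn' μ hfin t n) t s x]
    have step2 : ointeg μ (gMon μ t n) s x = ∑ k ∈ Finset.range (n+1),
        ((Nat.factorial n : ℝ) * (gMon μ t k s / (Nat.factorial k : ℝ)) /
          (Nat.factorial (n-k) : ℝ)) * (gMon μ s (n-k+1) x / ((n-k : ℕ) + 1 : ℝ)) := by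
      rw [hfun, ointeg_sum' μ (Finset.range (n+1)) (fun k => gMon μ s (n-k))
        (fun k => ((Nat.factorial n : ℝ) * (gMon μ t k s / (Nat.factorial k : ℝ)) /
          (Nat.factorial (n-k) : ℝ))) (fun i => gMon_integrableOn' μ hfin s (n-i)) s x]
      exact Finset.sum_congr rfl fun k _ => by rw [ointeg_eq_gMon_succ]
    have step3 : ointeg μ (gMon μ t n) t s = gMon μ t (n+1) s / ((n:ℝ)+1) :=
      ointeg_eq_gMon_succ μ t n s
    rw [step2, step3]
    have hterm : (gMon μ t (n+1) s / ((n:ℝ)+1) ) / (Nat.factorial n : ℝ)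
        = (gMon μ t (n+1) s / (Nat.factorial (n+1) : ℝ)) *
          (gMon μ s (n+1-(n+1)) x / (Nat.factorial (n+1-(n+1)) : ℝ)) := by
      rw [Nat.sub_self]
      show _ = _ * ((1:ℝ) / _)
      rw [Nat.factorial_succ, Nat.factorial_zero]
      push_cast
      field_simp
    conv_rhs => rw [Finset.sum_range_succ]
    rw [add_div, hterm, add_comm]
    congr 1
    rw [Finset.sum_div]
    refine Finset.sum_congr rfl fun k hk => ?_
    have hkn : k ≤ n := Nat.lt_succ_iff.mp (Finset.mem_range.mp hk)
    have hsub : n + 1 - k = (n - k) + 1 := Nat.succ_sub hkn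
    rw [hsub, Nat.factorial_succ, Nat.cast_mul, Nat.cast_add_one]
    have h1 : (Nat.factorial k : ℝ) ≠ 0 := by positivity
    have h2 : (Nat.factorial (n-k) : ℝ) ≠ 0 := by positivity
    have h3 : ((n-k : ℕ) : ℝ) + 1 ≠ 0 := by positivity
    generalize ((n-k : ℕ) : ℝ) = w at h3 ⊢
    field_simp

end AuxStmt18

/-- Cocycle/semigroup property of the Stieltjes exponential series: for `λ ≠ 0`, all `t`,
all `s ∈ Ω_t` and `x ∈ Ω_s`, one has `x ∈ Ω_t` and
`exp_g(λ;t)(s) · exp_g(λ;s)(x) = exp_g(λ;t)(x)`. -/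
theorem stmt18 {𝕜 : Type*} [RCLike 𝕜] (g : ℝ → ℝ) (μ : MeasureTheory.Measure ℝ)
    (hg : Monotone g) (hlc : ∀ x : ℝ, ContinuousWithinAt g (Set.Iio x) x)
    (hμ : ∀ a b : ℝ, a ≤ b → μ (Set.Ico a b) = ENNReal.ofReal (g b - g a))
    (l : 𝕜) (hl : l ≠ 0) :
    ∀ t s x : ℝ, gExpAbsConv μ l t s → gExpAbsConv μ l s x →
      gExpAbsConv μ l t x ∧ gExp μ l t s * gExp μ l s x = gExp μ l t x := by
  intro t s x hts hsx
  have hfin : ∀ a b : ℝ, μ (Set.Ico a b) ≠ ⊤ := by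
    intro a b
    rcases le_total a b with h | h
    · rw [hμ a b h]; exact ENNReal.ofReal_ne_top
    · rw [Set.Ico_eq_empty (not_lt.mpr h), measure_empty]; exact ENNReal.zero_ne_top
  have hnorm : ∀ (c y : ℝ) (k : ℕ),
      ‖l ^ k * ((gMon μ c k y : ℝ) : 𝕜) / ((Nat.factorial k : ℝ) : 𝕜)‖
        = ‖l‖ ^ k * |gMon μ c k y| / (Nat.factorial k : ℝ) := by
    intro c y k
    rw [norm_div, norm_mul, norm_pow, RCLike.norm_ofReal, RCLike.norm_ofReal,
      abs_of_nonneg (by positivity : (0:ℝ) ≤ (Nat.factorial k : ℝ))]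
  have hF : Summable fun k : ℕ =>
      ‖l ^ k * ((gMon μ t k s : ℝ) : 𝕜) / ((Nat.factorial k : ℝ) : 𝕜)‖ := by
    simpa only [hnorm, gExpAbsConv] using hts
  have hG : Summable fun k : ℕ =>
      ‖l ^ k * ((gMon μ s k x : ℝ) : 𝕜) / ((Nat.factorial k : ℝ) : 𝕜)‖ := by
    simpa only [hnorm, gExpAbsConv] using hsx
  have key : ∀ n : ℕ, ∑ k ∈ Finset.range (n+1),
      (l ^ k * ((gMon μ t k s : ℝ) : 𝕜) / ((Nat.factorial k : ℝ) : 𝕜)) *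
      (l ^ (n-k) * ((gMon μ s (n-k) x : ℝ) : 𝕜) / ((Nat.factorial (n-k) : ℝ) : 𝕜))
        = l ^ n * ((gMon μ t n x : ℝ) : 𝕜) / ((Nat.factorial n : ℝ) : 𝕜) := by
    intro n
    have hbin := gMon_binom μ hfin t s n x
    calc ∑ k ∈ Finset.range (n+1),
        (l ^ k * ((gMon μ t k s : ℝ) : 𝕜) / ((Nat.factorial k : ℝ) : 𝕜)) *
        (l ^ (n-k) * ((gMon μ s (n-k) x : ℝ) : 𝕜) / ((Nat.factorial (n-k) : ℝ) : 𝕜))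
        = ∑ k ∈ Finset.range (n+1), l ^ n *
          (((gMon μ t k s / (Nat.factorial k : ℝ)) *
            (gMon μ s (n-k) x / (Nat.factorial (n-k) : ℝ)) : ℝ) : 𝕜) := by
          refine Finset.sum_congr rfl fun k hk => ?_
          have hk' : k ≤ n := Nat.lt_succ_iff.mp (Finset.mem_range.mp hk)
          have hpow : l ^ n = l ^ k * l ^ (n - k) := by
            rw [← pow_add, Nat.add_sub_cancel' hk']
          rw [hpow, RCLike.ofReal_mul, RCLike.ofReal_div, RCLike.ofReal_div]
          ring
      _ = l ^ n * ((∑ k ∈ Finset.range (n+1),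
            (gMon μ t k s / (Nat.factorial k : ℝ)) *
            (gMon μ s (n-k) x / (Nat.factorial (n-k) : ℝ)) : ℝ) : 𝕜) := by
          rw [← Finset.mul_sum, RCLike.ofReal_sum]
      _ = l ^ n * ((gMon μ t n x / (Nat.factorial n : ℝ) : ℝ) : 𝕜) := by rw [← hbin]
      _ = l ^ n * ((gMon μ t n x : ℝ) : 𝕜) / ((Nat.factorial n : ℝ) : 𝕜) := by
          rw [RCLike.ofReal_div]; ring
  constructor
  · have hs := summable_norm_sum_mul_range_of_summable_norm hF hG
    simp only [key, hnorm] at hs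
    exact hs
  · unfold gExp
    rw [tsum_mul_tsum_eq_tsum_sum_range_of_summable_norm hF hG]
    exact tsum_congr key
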